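/- Let f ≥ 128 be an even integer, N := f/2 + 1, κ(t) := (sin(Nπt)/(N·sin(πt)))⁴ for t ∉ ℤ and κ(t) := 1 for t ∈ ℤ, C_f := π²f(f+4)/3, and for t ∈ ℝ^d let K(t) := Π_{i=1}^d κ(t_i). Let s ≥ 1 be a real number and Ā ≥ 2π/√3. Then for every t ∈ [−1/2, 1/2]^d with ‖t‖₂ ≥ Ā·√d·s^{1/4}/√C_f, one has |K(t)| ≤ (1 + (3/(4π²))·Ā²·d·√s)^{−2}. -/

import Mathlib

open Classical

/-- The univariate Fejér-type kernel `κ(t) = (sin(Nπt)/(N sin(πt)))⁴` with `N = f/2 + 1`,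
extended by `1` at the integers (where the formula degenerates). -/
noncomputable def fejerKappa (f : ℕ) : ℝ → ℝ := fun t =>
  if ∃ n : ℤ, t = (n : ℝ) then 1
  else (Real.sin (((f : ℝ) / 2 + 1) * Real.pi * t) /
      (((f : ℝ) / 2 + 1) * Real.sin (Real.pi * t))) ^ 4

/-- The constant `C_f = −κ''(0) = π² f (f+4)/3`. -/
noncomputable def fejerC (f : ℕ) : ℝ := Real.pi ^ 2 * f * (f + 4) / 3

lemma poly_ineq (p a b : ℝ) (hp : 9.85 ≤ p^2) (ha0 : 0 ≤ a) (ha : a ≤ 3.3)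
    (hb0 : 0 ≤ b) (hb : b ≤ a / 4225) :
    (p^2 + (a - b)) * (1 - a/4 + a^2/32 - a^3/1024) ≤ p^2 * (1 - b/4)^2 := by
  set Q : ℝ := 1 - a/4 + a^2/32 - a^3/1024 with hQdef
  have hR : Q = 1 - a * (a-16)^2 / 1024 := by rw [hQdef]; ring
  have h16 : (16129/100 : ℝ) ≤ (a-16)^2 := by nlinarith
  have h16' : a * (16129/100) ≤ a * (a-16)^2 := mul_le_mul_of_nonneg_left h16 ha0
  have hprodnn : 0 ≤ a * (a-16)^2 := mul_nonneg ha0 (sq_nonneg _)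
  have hQ1 : Q ≤ 1 - (157/1000) * a := by rw [hR]; linarith
  have hQ0 : 0 ≤ Q := by
    rw [hR]
    nlinarith [sq_nonneg (a-16), mul_nonneg ha0 (sq_nonneg (a-16)), sq_nonneg a]
  have hQ1' : Q ≤ 1 := by rw [hR]; linarith
  have hgap : (1 - b/4)^2 - Q ≥ (157/1000) * a - b/2 := by nlinarith [sq_nonneg b]
  have hmul : (p^2 - 9.85) * ((1 - b/4)^2 - Q) ≥ 0 := by
    apply mul_nonneg (by linarith)
    linarith
  nlinarith [mul_nonneg hb0 hQ0, mul_nonneg ha0 hQ0, mul_le_of_le_one_right ha0 hQ1']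

set_option maxHeartbeats 1000000 in
open Real in
lemma key_univ (N : ℝ) (hN : 65 ≤ N) (t : ℝ) (ht0 : 0 < t) (ht : t ≤ 1/2) :
    (1 + (N^2 - 1) * t^2) * Real.sin (N * Real.pi * t)^2
      ≤ N^2 * Real.sin (Real.pi * t)^2 := by
  have hπ1 : (3.141592 : ℝ) < π := pi_gt_d6
  have hπ2 : π < 3.141593 := pi_lt_d6
  have hπ0 : (0:ℝ) < π := pi_pos
  have hN0 : (0:ℝ) < N := by linarith
  have hx2t : 2 * t ≤ Real.sin (π * t) := by
    have h := mul_le_sin (x := π * t) (by positivity)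
      (by nlinarith only [hπ0, ht])
    calc 2 * t = 2 / π * (π * t) := by field_simp
    _ ≤ _ := h
  have hN2 : (1:ℝ) ≤ N^2 := by nlinarith only [hN]
  have hct2 : (0:ℝ) < 1 + (N^2 - 1) * t^2 := by
    have := mul_nonneg (by linarith : (0:ℝ) ≤ N^2 - 1) (sq_nonneg t)
    linarith
  by_cases hcase : 1 ≤ 3 * N^2 * t^2
  · have h1 : Real.sin (N * π * t)^2 ≤ 1 := sin_sq_le_one _
    have h2 : (2*t)^2 ≤ Real.sin (π * t)^2 :=
      pow_le_pow_left₀ (by linarith) hx2t 2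
    have F1 := mul_le_of_le_one_right hct2.le h1
    have F2 := mul_le_mul_of_nonneg_left h2 (sq_nonneg N)
    nlinarith only [F1, F2, hcase, sq_nonneg t]
  · push_neg at hcase
    set u : ℝ := N * π * t with hu_def
    set x : ℝ := π * t with hx_def
    clear_value u x
    have hu0 : 0 < u := by rw [hu_def]; positivity
    have hx0 : 0 < x := by rw [hx_def]; positivity
    have hNt : N^2 * t^2 < 1/3 := by linarith
    have hNt0 : (0:ℝ) ≤ N^2 * t^2 := by positivity
    have hππ : π^2 < 9.8697 := by nlinarith only [hπ2, hπ0]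
    have ha : u^2 ≤ 3.3 := by
      have e : u^2 = π^2 * (N^2 * t^2) := by rw [hu_def]; ring
      rw [e]
      nlinarith only [hππ, hNt, hNt0, sq_nonneg π]
    have hu_le : u ≤ 1.82 := by nlinarith only [ha, sq_nonneg (u - 91/50)]
    set v : ℝ := u / 2 with hv_def
    clear_value v
    have hv0 : 0 < v := by rw [hv_def]; positivity
    have hv1 : v ≤ 1 := by rw [hv_def]; linarith
    have hsv_lb : v - v^3/4 < Real.sin v := by have := sin_gt_sub_cube hv0; have := pow_pos hv0 3; linarith
    have hsv_ub : Real.sin v ≤ v := (sin_lt hv0).le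
    have hv2 : v^2 ≤ 1 := by nlinarith only [hv0, hv1]
    have hsv_lb0 : 0 < v - v^3/4 := by
      have e : v - v^3/4 = v * (1 - v^2/4) := by ring
      rw [e]; exact mul_pos hv0 (by linarith)
    have hσ0 : 0 < Real.sin v := lt_trans hsv_lb0 hsv_lb
    have hu2v : u = 2 * v := by rw [hv_def]; ring
    have h4 : Real.sin u ^2 = 4 * Real.sin v ^2 * (1 - Real.sin v ^2) := by
      calc Real.sin u ^2 = (2 * Real.sin v * Real.cos v)^2 := by rw [hu2v, sin_two_mul]
      _ = 4 * Real.sin v^2 * Real.cos v^2 := by ring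
      _ = 4 * Real.sin v ^2 * (1 - Real.sin v ^2) := by rw [cos_sq']
    have hwv : v - v^3/4 ≤ v := by
      have := (pow_pos hv0 3).le
      linarith
    have hwle1 : v - v^3/4 ≤ 1 := by linarith
    have hw1 : (v - v^3/4)^2 ≤ 1 := by nlinarith only [hsv_lb0, hwle1]
    have p1 : 0 ≤ (v^2 - Real.sin v^2) * (1 - (v - v^3/4)^2) :=
      mul_nonneg (by nlinarith only [hσ0, hsv_ub]) (by linarith)
    have p2 : 0 ≤ Real.sin v^2 * (Real.sin v^2 - (v - v^3/4)^2) :=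
      mul_nonneg (sq_nonneg _) (by nlinarith only [hsv_lb0, hsv_lb])
    have hfac : Real.sin u^2 ≤ 4 * v^2 * (1 - (v - v^3/4)^2) := by
      rw [h4]; nlinarith only [p1, p2]
    have hsinu2 : Real.sin u ^ 2 ≤ u^2 * (1 - u^2/4 + (u^2)^2/32 - (u^2)^3/1024) := by
      have e : 4 * v^2 * (1 - (v - v^3/4)^2)
          = u^2 * (1 - u^2/4 + (u^2)^2/32 - (u^2)^3/1024) := by
        rw [hu2v]; ring
      linarith [hfac, e.ge, e.le]
    have hux : u = N * x := by rw [hu_def, hx_def]; ring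
    have hx1 : x ≤ 1 := by
      have h65 : 65 * x ≤ N * x := mul_le_mul_of_nonneg_right hN hx0.le
      rw [hux] at hu_le
      linarith
    have hb : x^2 ≤ u^2 / 4225 := by
      have e2 : u^2 = N^2 * x^2 := by rw [hux]; ring
      have hN2' : (4225:ℝ) ≤ N^2 := by nlinarith only [hN]
      have := mul_nonneg (by linarith : (0:ℝ) ≤ N^2 - 4225) (sq_nonneg x)
      rw [e2]
      linarith
    have hpoly := poly_ineq π (u^2) (x^2) (by nlinarith only [hπ1]) (sq_nonneg u) ha
      (sq_nonneg x) hb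
    have hsx : x - x^3/4 < Real.sin x := by have := sin_gt_sub_cube hx0; have := pow_pos hx0 3; linarith
    have hsx0 : 0 ≤ x - x^3/4 := by
      have e : x - x^3/4 = x * (1 - x^2/4) := by ring
      have hx2 : x^2 ≤ 1 := by nlinarith only [hx0, hx1]
      rw [e]; exact mul_nonneg hx0.le (by linarith)
    have hsinx2 : x^2 * (1 - x^2/4)^2 ≤ Real.sin x ^ 2 := by
      have h := pow_le_pow_left₀ hsx0 hsx.le 2
      have e : x^2 * (1 - x^2/4)^2 = (x - x^3/4)^2 := by ring
      rw [e]; exact h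
    have hmain : π^2 * ((1 + (N^2-1)*t^2) * Real.sin u ^2)
        ≤ π^2 * (N^2 * Real.sin x ^2) := by
      have e1 : π^2 * ((1 + (N^2-1)*t^2) * (u^2 * (1 - u^2/4 + (u^2)^2/32 - (u^2)^3/1024)))
          = ((π^2 + (u^2 - x^2)) * (1 - u^2/4 + (u^2)^2/32 - (u^2)^3/1024)) * u^2 := by
        rw [hu_def, hx_def]; ring
      have e2 : u^2 = N^2 * x^2 := by rw [hux]; ring
      calc π^2 * ((1 + (N^2-1)*t^2) * Real.sin u ^2)
          ≤ π^2 * ((1 + (N^2-1)*t^2) * (u^2 * (1 - u^2/4 + (u^2)^2/32 - (u^2)^3/1024))) := by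
            apply mul_le_mul_of_nonneg_left _ (sq_nonneg π)
            exact mul_le_mul_of_nonneg_left hsinu2 hct2.le
        _ = ((π^2 + (u^2 - x^2)) * (1 - u^2/4 + (u^2)^2/32 - (u^2)^3/1024)) * u^2 := e1
        _ ≤ (π^2 * (1 - x^2/4)^2) * u^2 := mul_le_mul_of_nonneg_right hpoly (sq_nonneg u)
        _ = π^2 * (N^2 * (x^2 * (1 - x^2/4)^2)) := by rw [e2]; ring
        _ ≤ π^2 * (N^2 * Real.sin x ^2) := by
            apply mul_le_mul_of_nonneg_left _ (sq_nonneg π)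
            exact mul_le_mul_of_nonneg_left hsinx2 (sq_nonneg N)
    exact le_of_mul_le_mul_left hmain (by positivity)

lemma key_univ' (N : ℝ) (hN : 65 ≤ N) (t : ℝ) (ht0 : t ≠ 0) (ht : |t| ≤ 1/2) :
    (1 + (N^2 - 1) * t^2) * Real.sin (N * Real.pi * t)^2
      ≤ N^2 * Real.sin (Real.pi * t)^2 := by
  rcases ht0.lt_or_gt with h | h
  · have key := key_univ N hN (-t) (by linarith)
      (by rw [abs_of_neg h] at ht; linarith)
    have e1 : N * Real.pi * -t = -(N * Real.pi * t) := by ring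
    have e2 : Real.pi * -t = -(Real.pi * t) := by ring
    rw [e1, e2, Real.sin_neg, Real.sin_neg] at key
    simpa [neg_sq] using key
  · exact key_univ N hN t h (by rwa [abs_of_pos h] at ht)

lemma kappa_nonneg (f : ℕ) (t : ℝ) : 0 ≤ fejerKappa f t := by
  rw [fejerKappa]
  split
  · norm_num
  · positivity

lemma kappa_le (f : ℕ) (hf : 128 ≤ f) (t : ℝ) (ht : |t| ≤ 1/2) :
    fejerKappa f t ≤ ((1 + (((f : ℝ)/2 + 1)^2 - 1) * t^2)^2)⁻¹ := by
  have hfR : (128:ℝ) ≤ (f:ℝ) := by exact_mod_cast hf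
  set N : ℝ := (f : ℝ)/2 + 1 with hN_def
  have hN : 65 ≤ N := by rw [hN_def]; linarith
  have hN0 : 0 < N := by linarith
  have hc0 : (0:ℝ) ≤ N^2 - 1 := by nlinarith
  have h1ct : 0 < 1 + (N^2 - 1) * t^2 := by positivity
  by_cases hint : ∃ n : ℤ, t = (n : ℝ)
  · obtain ⟨n, rfl⟩ := hint
    have hn : n = 0 := by
      by_contra hne
      have h1 : (1:ℤ) ≤ |n| := Int.one_le_abs hne
      have : (1:ℝ) ≤ |(n:ℝ)| := by exact_mod_cast h1
      linarith
    subst hn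
    rw [fejerKappa]
    rw [if_pos ⟨0, by norm_num⟩]
    norm_num
  · have ht0 : t ≠ 0 := by
      rintro rfl
      exact hint ⟨0, by norm_num⟩
    have hkey := key_univ' N hN t ht0 ht
    have hsin_ne : Real.sin (Real.pi * t) ≠ 0 := by
      intro hsin
      rw [Real.sin_eq_zero_iff] at hsin
      obtain ⟨n, hn⟩ := hsin
      have h2 : Real.pi * (n:ℝ) = Real.pi * t := by rw [mul_comm]; exact hn
      exact hint ⟨n, (mul_left_cancel₀ Real.pi_ne_zero h2).symm⟩
    have hDne : N * Real.sin (Real.pi * t) ≠ 0 := mul_ne_zero (ne_of_gt hN0) hsin_ne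
    have hD2 : 0 < (N * Real.sin (Real.pi * t))^2 :=
      lt_of_le_of_ne (sq_nonneg _) (Ne.symm (pow_ne_zero 2 hDne))
    rw [fejerKappa]
    rw [if_neg hint]
    set S : ℝ := Real.sin (N * Real.pi * t) with hS_def
    set D : ℝ := N * Real.sin (Real.pi * t) with hD_def
    clear_value S D
    have hfrac : S^2 / D^2 ≤ (1 + (N^2 - 1) * t^2)⁻¹ := by
      rw [inv_eq_one_div, div_le_div_iff₀ hD2 h1ct]
      have e : D^2 = N^2 * Real.sin (Real.pi * t)^2 := by rw [hD_def]; ring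
      rw [e]
      linarith [hkey]
    have e4 : (S / D)^4 = (S^2 / D^2)^2 := by
      field_simp
    rw [e4, ← inv_pow]
    exact pow_le_pow_left₀ (by positivity) hfrac 2

lemma one_add_sum_le_prod {ι : Type*} (s : Finset ι) (x : ι → ℝ)
    (hx : ∀ i ∈ s, 0 ≤ x i) :
    1 + ∑ i ∈ s, x i ≤ ∏ i ∈ s, (1 + x i) := by
  induction s using Finset.cons_induction with
  | empty => simp
  | cons a s ha ih =>
    rw [Finset.prod_cons, Finset.sum_cons]
    have hx' : ∀ i ∈ s, 0 ≤ x i := fun i hi => hx i (Finset.mem_cons.mpr (Or.inr hi))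
    have h1 := ih hx'
    have hxa : 0 ≤ x a := hx a (Finset.mem_cons_self a s)
    have hsum : 0 ≤ ∑ i ∈ s, x i := Finset.sum_nonneg hx'
    have h2 : (1 + x a) * (1 + ∑ i ∈ s, x i) ≤ (1 + x a) * ∏ i ∈ s, (1 + x i) :=
      mul_le_mul_of_nonneg_left h1 (by linarith)
    nlinarith [mul_nonneg hxa hsum]

/-- the kernel-decay estimate in the proof of Lemma 16 of the paper.
If `Ā ≥ 2π/√3`, `s ≥ 1` and `t ∈ [−1/2, 1/2]^d` with `‖t‖₂ ≥ Ā √d s^{1/4} / √C_f`, then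
`|K(t)| ≤ (1 + (3/(4π²)) Ā² d √s)^{−2}` for the multivariate Fejér kernel `K(t) = ∏ᵢ κ(tᵢ)`. -/
theorem statement10 {d : ℕ} (f : ℕ) (hfeven : Even f) (hf : 128 ≤ f)
    (s : ℝ) (hs : 1 ≤ s) (A : ℝ) (hA : 2 * Real.pi / Real.sqrt 3 ≤ A)
    (t : EuclideanSpace ℝ (Fin d)) (ht : ∀ i, |t i| ≤ 1 / 2)
    (hsep : A * Real.sqrt d * s ^ ((1 : ℝ) / 4) / Real.sqrt (fejerC f) ≤ ‖t‖) :
    |∏ i, fejerKappa f (t i)| ≤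
      ((1 + 3 / (4 * Real.pi ^ 2) * A ^ 2 * d * Real.sqrt s) ^ 2)⁻¹ := by
  have hfR : (128:ℝ) ≤ (f:ℝ) := by exact_mod_cast hf
  have hπ0 : 0 < Real.pi := Real.pi_pos
  set c : ℝ := ((f:ℝ)/2 + 1)^2 - 1 with hc_def
  have hc0 : 0 ≤ c := by rw [hc_def]; nlinarith only [hfR]
  have hk0 : ∀ i, (0:ℝ) ≤ fejerKappa f (t i) := fun i => kappa_nonneg f (t i)
  rw [abs_of_nonneg (Finset.prod_nonneg (fun i _ => hk0 i))]
  have hstep1 : ∏ i, fejerKappa f (t i) ≤ ∏ i, ((1 + c * (t i)^2)^2)⁻¹ :=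
    Finset.prod_le_prod (fun i _ => hk0 i) (fun i _ => kappa_le f hf (t i) (ht i))
  have hstep2 : ∏ i, ((1 + c * (t i)^2)^2)⁻¹ = ((∏ i, (1 + c * (t i)^2))^2)⁻¹ := by
    rw [← Finset.prod_pow, ← Finset.prod_inv_distrib]
  have hx0 : ∀ i ∈ (Finset.univ : Finset (Fin d)), (0:ℝ) ≤ c * (t i)^2 :=
    fun i _ => mul_nonneg hc0 (sq_nonneg _)
  have hps : 1 + ∑ i, c * (t i)^2 ≤ ∏ i, (1 + c * (t i)^2) :=
    one_add_sum_le_prod _ _ hx0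
  have hsum_eq : ∑ i, c * (t i)^2 = c * ∑ i, (t i)^2 := by rw [Finset.mul_sum]
  have hnorm : ‖t‖^2 = ∑ i, (t i)^2 := by
    rw [EuclideanSpace.norm_eq, Real.sq_sqrt (by positivity)]
    simp [Real.norm_eq_abs, sq_abs]
  have hA0 : 0 < A :=
    lt_of_lt_of_le (by positivity : (0:ℝ) < 2 * Real.pi / Real.sqrt 3) hA
  have hs0 : (0:ℝ) < s := lt_of_lt_of_le one_pos hs
  have hfpos : (0:ℝ) < (f:ℝ) := by linarith
  have hC0 : 0 < fejerC f := by
    have h2 := mul_pos (mul_pos (pow_pos hπ0 2) hfpos)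
      (by linarith : (0:ℝ) < (f:ℝ) + 4)
    rw [fejerC]; linarith
  have hR0 : 0 ≤ A * Real.sqrt d * s ^ ((1:ℝ)/4) / Real.sqrt (fejerC f) := by positivity
  have hq : (s ^ ((1:ℝ)/4))^2 = Real.sqrt s := by
    rw [Real.sqrt_eq_rpow, ← Real.rpow_natCast (s ^ ((1:ℝ)/4)) 2,
      ← Real.rpow_mul hs0.le]
    norm_num
  have hRsq : (A * Real.sqrt d * s ^ ((1:ℝ)/4) / Real.sqrt (fejerC f))^2
      = A^2 * d * Real.sqrt s / fejerC f := by
    rw [div_pow, mul_pow, mul_pow, Real.sq_sqrt (by positivity : (0:ℝ) ≤ (d:ℝ)),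
      Real.sq_sqrt hC0.le, hq]
  have hsep2 : A^2 * d * Real.sqrt s / fejerC f ≤ ‖t‖^2 := by
    have h2 := pow_le_pow_left₀ hR0 hsep 2
    rwa [hRsq] at h2
  have hconst : 3 / (4 * Real.pi^2) * A^2 * (d:ℝ) * Real.sqrt s
      = c * (A^2 * d * Real.sqrt s / fejerC f) := by
    rw [hc_def, fejerC]
    have hπne : Real.pi ≠ 0 := Real.pi_ne_zero
    have hfne : (f:ℝ) ≠ 0 := ne_of_gt hfpos
    have hf4ne : (f:ℝ) + 4 ≠ 0 := by positivity
    field_simp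
    ring
  have hY0 : 0 ≤ 3 / (4 * Real.pi^2) * A^2 * (d:ℝ) * Real.sqrt s := by positivity
  have hX : 3 / (4 * Real.pi^2) * A^2 * (d:ℝ) * Real.sqrt s ≤ c * ∑ i, (t i)^2 := by
    rw [hconst, ← hnorm]
    exact mul_le_mul_of_nonneg_left hsep2 hc0
  have hfinal : 1 + 3 / (4 * Real.pi^2) * A^2 * (d:ℝ) * Real.sqrt s
      ≤ ∏ i, (1 + c * (t i)^2) := by
    rw [hsum_eq] at hps
    exact le_trans (by linarith) hps
  calc ∏ i, fejerKappa f (t i)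
      ≤ ((∏ i, (1 + c * (t i)^2))^2)⁻¹ := by rw [← hstep2]; exact hstep1
    _ ≤ ((1 + 3 / (4 * Real.pi ^ 2) * A ^ 2 * d * Real.sqrt s) ^ 2)⁻¹ := by
        apply inv_anti₀ (by positivity)
        exact pow_le_pow_left₀ (by positivity) hfinal 2
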